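/- The function x ↦ x ψ'(x) = 2πx sin(2πx)/(1 - cos(2πx)) is monotonically decreasing on (0, 1/2] and tends to 2 as x → 0⁺; in particular ψ'(x) ≤ 2/x for all x ∈ (0, 1/2]. -/

import Mathlib

open Real Set Filter

private lemma sinpix_pos {x : ℝ} (hx : 0 < x) (hx1 : x < 1) : 0 < Real.sin (π * x) :=
  Real.sin_pos_of_pos_of_lt_pi (by positivity) (by nlinarith [Real.pi_pos])

private lemma denom_pos {x : ℝ} (hx : 0 < x) (hx1 : x < 1) :
    0 < 1 - Real.cos (2 * π * x) := by
  have h : Real.cos (2 * π * x) = 1 - 2 * Real.sin (π * x) ^ 2 := by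
    have := Real.cos_two_mul (π * x)
    have h2 := Real.sin_sq_add_cos_sq (π * x)
    have : Real.cos (2 * (π * x)) = 2 * Real.cos (π * x) ^ 2 - 1 := Real.cos_two_mul _
    rw [show 2 * π * x = 2 * (π * x) by ring, this]; nlinarith
  have hs := sinpix_pos hx hx1
  nlinarith

private lemma hasDeriv (x : ℝ) :
    HasDerivAt (fun x : ℝ => 2 * π * x * Real.sin (2 * π * x))
      (2 * π * Real.sin (2 * π * x) + 2 * π * x * (Real.cos (2 * π * x) * (2 * π))) x ∧
    HasDerivAt (fun x : ℝ => 1 - Real.cos (2 * π * x)) (Real.sin (2 * π * x) * (2 * π)) x := by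
  have h1 : HasDerivAt (fun x : ℝ => 2 * π * x) (2 * π) x := by
    simpa using (hasDerivAt_id x).const_mul (2 * π)
  have h2 : HasDerivAt (fun x : ℝ => Real.sin (2 * π * x)) (Real.cos (2 * π * x) * (2 * π)) x :=
    (Real.hasDerivAt_sin _).comp x h1
  have h3 : HasDerivAt (fun x : ℝ => Real.cos (2 * π * x)) (-Real.sin (2 * π * x) * (2 * π)) x :=
    (Real.hasDerivAt_cos _).comp x h1
  refine ⟨by simpa [mul_comm] using h1.fun_mul h2, ?_⟩
  simpa using h3.const_sub 1

private lemma hasDerivF {x : ℝ} (hx : 0 < x) (hx1 : x < 1) :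
    HasDerivAt (fun x : ℝ => 2 * π * x * Real.sin (2 * π * x) / (1 - Real.cos (2 * π * x)))
      (((2 * π * Real.sin (2 * π * x) + 2 * π * x * (Real.cos (2 * π * x) * (2 * π))) *
          (1 - Real.cos (2 * π * x)) -
        2 * π * x * Real.sin (2 * π * x) * (Real.sin (2 * π * x) * (2 * π))) /
        (1 - Real.cos (2 * π * x)) ^ 2) x :=
  (hasDeriv x).1.div (hasDeriv x).2 (ne_of_gt (denom_pos hx hx1))

theorem x_mul_psi_deriv_monotone :
    AntitoneOn (fun x : ℝ => 2 * Real.pi * x * Real.sin (2 * Real.pi * x) /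
      (1 - Real.cos (2 * Real.pi * x))) (Set.Ioc (0:ℝ) (1/2)) ∧
    Filter.Tendsto (fun x : ℝ => 2 * Real.pi * x * Real.sin (2 * Real.pi * x) /
      (1 - Real.cos (2 * Real.pi * x))) (nhdsWithin 0 (Set.Ioi 0)) (nhds 2) ∧
    ∀ x ∈ Set.Ioc (0:ℝ) (1/2),
      2 * Real.pi * Real.sin (2 * Real.pi * x) / (1 - Real.cos (2 * Real.pi * x)) ≤ 2 / x := by
  set F : ℝ → ℝ := fun x : ℝ => 2 * π * x * Real.sin (2 * π * x) / (1 - Real.cos (2 * π * x))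
    with hF
  have hmem : ∀ x ∈ Set.Ioc (0:ℝ) (1/2), 0 < x ∧ x < 1 := fun x hx =>
    ⟨hx.1, lt_of_le_of_lt hx.2 (by norm_num)⟩
  -- Antitone
  have hanti : AntitoneOn F (Set.Ioc (0:ℝ) (1/2)) := by
    have hint : interior (Set.Ioc (0:ℝ) (1/2)) = Set.Ioo 0 (1/2) := interior_Ioc
    apply antitoneOn_of_deriv_nonpos (convex_Ioc _ _)
    · -- continuity
      apply ContinuousOn.div
      · fun_prop
      · fun_prop
      · intro x hx
        exact ne_of_gt (denom_pos (hmem x hx).1 (hmem x hx).2)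
    · rw [hint]
      intro x hx
      exact (hasDerivF hx.1 (by linarith [hx.2])).differentiableAt.differentiableWithinAt
    · rw [hint]
      intro x hx
      have hx0 : 0 < x := hx.1
      have hx1 : x < 1 := by linarith [hx.2]
      rw [(hasDerivF hx0 hx1).deriv]
      apply div_nonpos_of_nonpos_of_nonneg _ (sq_nonneg _)
      have hsl : Real.sin (2 * π * x) < 2 * π * x :=
        Real.sin_lt (by positivity)
      have hd := denom_pos hx0 hx1
      have hpy := Real.sin_sq_add_cos_sq (2 * π * x)
      have key : (2 * π * Real.sin (2 * π * x) + 2 * π * x * (Real.cos (2 * π * x) * (2 * π))) *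
          (1 - Real.cos (2 * π * x)) -
          2 * π * x * Real.sin (2 * π * x) * (Real.sin (2 * π * x) * (2 * π)) =
          (2 * π * (1 - Real.cos (2 * π * x))) * (Real.sin (2 * π * x) - 2 * π * x) := by
        linear_combination (-(2 * π * (2 * π * x))) * hpy
      rw [key]
      exact mul_nonpos_of_nonneg_of_nonpos (by positivity) (by linarith)
  have hlim2 : Filter.Tendsto F (nhdsWithin 0 (Set.Ioi 0)) (nhds 2) := by
    have hslope : Tendsto (fun y : ℝ => Real.sin y / y) (nhdsWithin 0 (Set.Ioi 0)) (nhds 1) := by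
      have h := hasDerivAt_iff_tendsto_slope.1 (Real.hasDerivAt_sin 0)
      rw [Real.cos_zero] at h
      have h2 := h.mono_left (nhdsWithin_mono 0 (fun y hy => ne_of_gt hy : Set.Ioi (0:ℝ) ⊆ {0}ᶜ))
      refine h2.congr (fun y => ?_)
      simp [slope_def_field, div_eq_mul_inv, mul_comm]
    have hcomp : Tendsto (fun x : ℝ => π * x) (nhdsWithin 0 (Set.Ioi 0))
        (nhdsWithin 0 (Set.Ioi 0)) := by
      apply tendsto_nhdsWithin_of_tendsto_nhds_of_eventually_within
      · have hc : Filter.Tendsto (fun x : ℝ => π * x) (nhds (0:ℝ)) (nhds 0) := by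
          have hc2 : Continuous (fun x : ℝ => π * x) := by fun_prop
          simpa using hc2.tendsto (0:ℝ)
        exact hc.mono_left nhdsWithin_le_nhds
      · filter_upwards [self_mem_nhdsWithin] with x hx
        exact mul_pos Real.pi_pos hx
    have h1 : Tendsto (fun x : ℝ => Real.sin (π * x) / (π * x))
        (nhdsWithin 0 (Set.Ioi 0)) (nhds 1) := hslope.comp hcomp
    have hcos : Tendsto (fun x : ℝ => Real.cos (π * x)) (nhdsWithin 0 (Set.Ioi 0)) (nhds 1) := by
      have : Continuous (fun x : ℝ => Real.cos (π * x)) := by fun_prop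
      simpa using (this.tendsto 0).mono_left nhdsWithin_le_nhds
    have hlim : Tendsto (fun x : ℝ => 2 * Real.cos (π * x) * (Real.sin (π * x) / (π * x))⁻¹)
        (nhdsWithin 0 (Set.Ioi 0)) (nhds 2) := by
      have := (hcos.const_mul 2).mul (h1.inv₀ one_ne_zero)
      simpa using this
    refine hlim.congr' ?_
    have hsub : Set.Ioo (0:ℝ) 1 ∈ nhdsWithin 0 (Set.Ioi 0) := by
      apply mem_nhdsWithin.2 ⟨Set.Iio 1, isOpen_Iio, by norm_num, ?_⟩
      rintro y ⟨hy1, hy2⟩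
      exact ⟨hy2, hy1⟩
    filter_upwards [hsub] with x hx
    have hs := sinpix_pos hx.1 hx.2
    have hd := denom_pos hx.1 hx.2
    have hdc : 1 - Real.cos (2 * π * x) = 2 * Real.sin (π * x) ^ 2 := by
      have h2 := Real.sin_sq_add_cos_sq (π * x)
      have : Real.cos (2 * (π * x)) = 2 * Real.cos (π * x) ^ 2 - 1 := Real.cos_two_mul _
      rw [show 2 * π * x = 2 * (π * x) by ring, this]; nlinarith
    have hsin2 : Real.sin (2 * π * x) = 2 * Real.sin (π * x) * Real.cos (π * x) := by
      rw [show 2 * π * x = 2 * (π * x) by ring]; exact Real.sin_two_mul _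
    have hx0' : 0 < x := hx.1
    have hpx : π * x ≠ 0 := by positivity
    rw [hF]
    simp only
    rw [hdc, hsin2]
    field_simp
  refine ⟨hanti, hlim2, ?_⟩
  · -- bound
    intro x hx
    obtain ⟨hx0, hx1⟩ := hmem x hx
    have hd := denom_pos hx0 hx1
    have hF2 : F x ≤ 2 := by
      -- F x ≤ F y for all small y, F y → 2
      have hev : ∀ᶠ y in nhdsWithin 0 (Set.Ioi (0:ℝ)), F x ≤ F y := by
        have hsub : Set.Ioc (0:ℝ) x ∈ nhdsWithin 0 (Set.Ioi 0) := by
          apply mem_nhdsWithin.2 ⟨Set.Iio x, isOpen_Iio, hx0, ?_⟩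
          rintro y ⟨hy1, hy2⟩
          exact ⟨hy2, le_of_lt hy1⟩
        filter_upwards [hsub] with y hy
        exact hanti ⟨hy.1, le_trans hy.2 hx.2⟩ hx hy.2
      exact ge_of_tendsto hlim2 hev
    rw [div_le_div_iff₀ hd hx0]
    have : 2 * π * Real.sin (2 * π * x) * x = F x * (1 - Real.cos (2 * π * x)) := by
      rw [hF]; field_simp
    rw [this]
    exact mul_le_mul_of_nonneg_right hF2 (le_of_lt hd)
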